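/- Let N ∈ ℕ and c₀,…,c_N, d₀,…,d_N ∈ ℝ, and let Λ(θ) = Σ_{l=0}^N [c_l cos(lθ) + d_l sin(lθ)]. Then for all μ ∈ ℝ and σ > 0 the series Σ_{j=0}^∞ Λ^{(2j)}(μ) σ^{2j}/(2j)!! and Σ_{j=0}^∞ Λ^{(2j+1)}(μ) σ^{2j}/(2j)!! converge, and b(μ,σ) = Σ_{j=0}^∞ Λ^{(2j)}(μ) σ^{2j}/(2j)!! while χ(μ,σ) = Σ_{j=0}^∞ Λ^{(2j+1)}(μ) σ^{2j}/(2j)!!. Here Λ^{(k)} denotes the k-th derivative of Λ and (2j)!! = 2^j · j!. -/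

import Mathlib

open MeasureTheory

/-- The Gaussian density with mean μ and standard deviation σ. -/
noncomputable def gaussDensity (μ σ θ : ℝ) : ℝ :=
  (Real.sqrt (2 * Real.pi) * σ)⁻¹ * Real.exp (-(θ - μ) ^ 2 / (2 * σ ^ 2))

/-- The expected bias `b(μ,σ) = ∫ p(θ;μ,σ) Λ(θ) dθ`. -/
noncomputable def expBias (Λ : ℝ → ℝ) (μ σ : ℝ) : ℝ :=
  ∫ θ : ℝ, gaussDensity μ σ θ * Λ θ

/-- The chi function `χ(μ,σ) = σ⁻² ∫ (θ−μ) p(θ;μ,σ) Λ(θ) dθ`. -/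
noncomputable def chiFun (Λ : ℝ → ℝ) (μ σ : ℝ) : ℝ :=
  (1 / σ ^ 2) * ∫ θ : ℝ, (θ - μ) * gaussDensity μ σ θ * Λ θ



open Real

lemma trig_hasDeriv (a φ A cl dl : ℝ) (θ : ℝ) :
    HasDerivAt (fun x : ℝ => A * (cl * Real.cos (a*x + φ) + dl * Real.sin (a*x + φ)))
      (A * a * (cl * Real.cos (a*θ + φ + π/2) + dl * Real.sin (a*θ + φ + π/2))) θ := by
  have h0 : HasDerivAt (fun x : ℝ => a*x + φ) a θ := by
    simpa using ((hasDerivAt_id θ).const_mul a).add_const φ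
  have hc := (Real.hasDerivAt_cos (a*θ+φ)).comp θ h0
  have hs := (Real.hasDerivAt_sin (a*θ+φ)).comp θ h0
  have := ((hc.const_mul cl).add (hs.const_mul dl)).const_mul A
  refine this.congr_deriv ?_
  rw [Real.cos_add_pi_div_two, Real.sin_add_pi_div_two]
  ring

lemma iter_trig (N : ℕ) (c d : ℕ → ℝ) (n : ℕ) :
    iteratedDeriv n (fun θ : ℝ => ∑ l ∈ Finset.range (N + 1),
        (c l * Real.cos (l * θ) + d l * Real.sin (l * θ)))
      = fun θ : ℝ => ∑ l ∈ Finset.range (N + 1), (l:ℝ)^n *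
        (c l * Real.cos (l * θ + n*(π/2)) + d l * Real.sin (l * θ + n*(π/2))) := by
  induction n with
  | zero => simp
  | succ n ih =>
    rw [iteratedDeriv_succ, ih]
    funext θ
    have h : HasDerivAt (fun θ : ℝ => ∑ l ∈ Finset.range (N + 1), (l:ℝ)^n *
        (c l * Real.cos (l * θ + n*(π/2)) + d l * Real.sin (l * θ + n*(π/2))))
        (∑ l ∈ Finset.range (N + 1), (l:ℝ)^n * l *
          (c l * Real.cos (l * θ + n*(π/2) + π/2) + d l * Real.sin (l * θ + n*(π/2) + π/2))) θ :=
      HasDerivAt.fun_sum fun (l : ℕ) _ => trig_hasDeriv (l:ℝ) (n*(π/2)) ((l:ℝ)^n) (c l) (d l) θ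
    rw [h.deriv]
    refine Finset.sum_congr rfl fun l _ => ?_
    have h1 : ((n+1 : ℕ):ℝ)*(π/2) = n*(π/2) + π/2 := by push_cast; ring
    rw [h1]
    ring

lemma iter_trig_even (N : ℕ) (c d : ℕ → ℝ) (j : ℕ) (μ : ℝ) :
    iteratedDeriv (2*j) (fun θ : ℝ => ∑ l ∈ Finset.range (N + 1),
        (c l * Real.cos (l * θ) + d l * Real.sin (l * θ))) μ
      = ∑ l ∈ Finset.range (N + 1), (-1:ℝ)^j * (l:ℝ)^(2*j) *
        (c l * Real.cos (l * μ) + d l * Real.sin (l * μ)) := by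
  rw [iter_trig]
  refine Finset.sum_congr rfl fun l _ => ?_
  have h1 : ((2*j : ℕ):ℝ)*(π/2) = j*π := by push_cast; ring
  rw [h1, Real.cos_add_nat_mul_pi, Real.sin_add_nat_mul_pi]
  ring

lemma iter_trig_odd (N : ℕ) (c d : ℕ → ℝ) (j : ℕ) (μ : ℝ) :
    iteratedDeriv (2*j+1) (fun θ : ℝ => ∑ l ∈ Finset.range (N + 1),
        (c l * Real.cos (l * θ) + d l * Real.sin (l * θ))) μ
      = ∑ l ∈ Finset.range (N + 1), (-1:ℝ)^j * (l:ℝ)^(2*j+1) *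
        (d l * Real.cos (l * μ) - c l * Real.sin (l * μ)) := by
  rw [iter_trig]
  refine Finset.sum_congr rfl fun l _ => ?_
  have h1 : ((2*j+1 : ℕ):ℝ)*(π/2) = (l*μ + π/2 + j*π) - l*μ := by push_cast; ring
  rw [h1, show (l:ℝ)*μ + ((l*μ + π/2 + j*π) - l*μ) = (l*μ + π/2) + j*π by ring,
    Real.cos_add_nat_mul_pi, Real.sin_add_nat_mul_pi,
    Real.cos_add_pi_div_two, Real.sin_add_pi_div_two]
  ring

lemma exp_tsum' (x : ℝ) : ∑' j : ℕ, x^j / (Nat.factorial j) = Real.exp x := by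
  rw [Real.exp_eq_exp_ℝ, NormedSpace.exp_eq_tsum_div]

section CplxInt
variable {μ σ a : ℝ}

lemma quad_eq (hσ : 0 < σ) (a θ : ℝ) :
    ((-(1/(2*σ^2)) : ℝ) : ℂ) * (θ:ℂ)^2 + (((μ/σ^2 : ℝ):ℂ) + (a:ℂ)*Complex.I) * (θ:ℂ)
      + ((-(μ^2/(2*σ^2)) : ℝ):ℂ)
      = ((-(θ-μ)^2/(2*σ^2) : ℝ) : ℂ) + ((a*θ : ℝ):ℂ) * Complex.I := by
  have R1 : -(1/(2*σ^2))*θ^2 + (μ/σ^2)*θ + -(μ^2/(2*σ^2)) = -(θ-μ)^2/(2*σ^2) := by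
    field_simp
    ring
  calc ((-(1/(2*σ^2)) : ℝ) : ℂ) * (θ:ℂ)^2 + (((μ/σ^2 : ℝ):ℂ) + (a:ℂ)*Complex.I) * (θ:ℂ)
      + ((-(μ^2/(2*σ^2)) : ℝ):ℂ)
      = ((-(1/(2*σ^2))*θ^2 + (μ/σ^2)*θ + -(μ^2/(2*σ^2)) : ℝ) : ℂ)
        + ((a*θ : ℝ):ℂ) * Complex.I := by push_cast; ring
    _ = ((-(θ-μ)^2/(2*σ^2) : ℝ) : ℂ) + ((a*θ : ℝ):ℂ) * Complex.I := by rw [R1]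

lemma I1 (hσ : 0 < σ) (a : ℝ) :
    ∫ θ : ℝ, Complex.exp (((-(θ-μ)^2/(2*σ^2) : ℝ) : ℂ) + ((a*θ : ℝ):ℂ) * Complex.I)
      = ((Real.sqrt (2*Real.pi) * σ : ℝ) : ℂ)
        * Complex.exp (((a*μ : ℝ):ℂ) * Complex.I + ((-(a^2*σ^2)/2 : ℝ):ℂ)) := by
  have hs2 : (0:ℝ) < σ^2 := pow_pos hσ 2
  have hb : (((-(1/(2*σ^2)) : ℝ) : ℂ)).re < 0 := by
    simp only [Complex.ofReal_re, neg_lt_zero, one_div, inv_pos]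
    linarith
  rw [show (fun θ : ℝ => Complex.exp (((-(θ-μ)^2/(2*σ^2) : ℝ) : ℂ) + ((a*θ : ℝ):ℂ) * Complex.I))
      = fun θ : ℝ => Complex.exp (((-(1/(2*σ^2)) : ℝ) : ℂ) * (θ:ℂ)^2
        + (((μ/σ^2 : ℝ):ℂ) + (a:ℂ)*Complex.I) * (θ:ℂ) + ((-(μ^2/(2*σ^2)) : ℝ):ℂ))
      from funext fun θ => by rw [quad_eq hσ]]
  rw [integral_cexp_quadratic hb]
  congr 1
  · have h1 : (Real.pi : ℂ) / -((-(1/(2*σ^2)) : ℝ) : ℂ) = ((2*Real.pi*σ^2 : ℝ) : ℂ) := by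
      rw [← sub_eq_zero]
      have hσ' : (σ:ℂ) ≠ 0 := by exact_mod_cast hσ.ne'
      push_cast
      field_simp
      ring
    rw [h1, show ((1:ℂ)/2) = (((1/2 : ℝ)):ℂ) by norm_num,
      ← Complex.ofReal_cpow (by positivity)]
    congr 1
    rw [← Real.sqrt_eq_rpow]
    rw [show 2*Real.pi*σ^2 = (2*Real.pi)*σ^2 by ring, Real.sqrt_mul (by positivity),
      Real.sqrt_sq hσ.le]
  · congr 1
    have hσ' : (σ:ℂ) ≠ 0 := by exact_mod_cast hσ.ne'
    push_cast
    ring_nf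
    simp only [Complex.I_sq]
    field_simp
    ring
end CplxInt

section CplxInt2
variable {μ σ : ℝ}

lemma integrable_cexp1 (hσ : 0 < σ) (a : ℝ) :
    Integrable fun θ : ℝ =>
      Complex.exp (((-(θ-μ)^2/(2*σ^2) : ℝ) : ℂ) + ((a*θ : ℝ):ℂ) * Complex.I) := by
  have hs2 : (0:ℝ) < σ^2 := pow_pos hσ 2
  have hb : (((-(1/(2*σ^2)) : ℝ) : ℂ)).re < 0 := by
    simp only [Complex.ofReal_re, neg_lt_zero, one_div, inv_pos]; linarith
  have := integrable_cexp_quadratic' hb (((μ/σ^2 : ℝ):ℂ) + (a:ℂ)*Complex.I)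
    ((-(μ^2/(2*σ^2)) : ℝ):ℂ)
  refine this.congr ?_
  filter_upwards with θ
  rw [quad_eq hσ]

lemma integrable_xcexp1 (hσ : 0 < σ) (a : ℝ) :
    Integrable fun θ : ℝ => ((θ:ℂ) - (μ:ℂ)) *
      Complex.exp (((-(θ-μ)^2/(2*σ^2) : ℝ) : ℂ) + ((a*θ : ℝ):ℂ) * Complex.I) := by
  have hs2 : (0:ℝ) < 1/(2*σ^2) := by positivity
  have hint : Integrable fun θ : ℝ => |θ - μ| * Real.exp (-(1/(2*σ^2)) * (θ-μ)^2) := by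
    have h := ((integrable_mul_exp_neg_mul_sq hs2).comp_sub_right μ).abs
    refine h.congr ?_
    filter_upwards with θ
    rw [abs_mul, abs_of_nonneg (Real.exp_pos _).le]
  refine hint.mono' ?_ ?_
  · apply Continuous.aestronglyMeasurable
    fun_prop
  · filter_upwards with θ
    simp only [norm_mul, Complex.norm_exp]
    have h1 : (((-(θ-μ)^2/(2*σ^2) : ℝ) : ℂ) + ((a*θ : ℝ):ℂ) * Complex.I).re
        = -(θ-μ)^2/(2*σ^2) := by
      simp only [Complex.add_re, Complex.ofReal_re, Complex.mul_I_re, Complex.ofReal_im]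
      ring
    rw [h1, show ((θ:ℂ) - (μ:ℂ)) = ((θ-μ : ℝ):ℂ) by push_cast; ring, Complex.norm_real, Real.norm_eq_abs,
      show -(θ-μ)^2/(2*σ^2) = -(1/(2*σ^2))*(θ-μ)^2 by ring]

lemma I2 (hσ : 0 < σ) (a : ℝ) :
    ∫ θ : ℝ, ((θ:ℂ) - (μ:ℂ)) *
        Complex.exp (((-(θ-μ)^2/(2*σ^2) : ℝ) : ℂ) + ((a*θ : ℝ):ℂ) * Complex.I)
      = Complex.I * (a:ℂ) * ((σ:ℂ))^2 * (((Real.sqrt (2*Real.pi) * σ : ℝ) : ℂ)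
        * Complex.exp (((a*μ : ℝ):ℂ) * Complex.I + ((-(a^2*σ^2)/2 : ℝ):ℂ))) := by
  have hσ' : (σ:ℂ) ≠ 0 := by exact_mod_cast hσ.ne'
  set E : ℝ → ℂ := fun θ => ((-(θ-μ)^2/(2*σ^2) : ℝ) : ℂ) + ((a*θ : ℝ):ℂ) * Complex.I with hE
  have hderiv : ∀ θ : ℝ, HasDerivAt (fun x : ℝ => ((σ:ℂ))^2 * Complex.exp (E x))
      ((Complex.I * (a:ℂ) * ((σ:ℂ))^2 - ((θ:ℂ) - (μ:ℂ))) * Complex.exp (E θ)) θ := by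
    intro θ
    have h0 : HasDerivAt (fun x : ℝ => (x:ℂ)) 1 θ := by
      have := Complex.ofRealCLM.hasDerivAt (x := θ)
      simp at this
      exact this
    have hEq : HasDerivAt (fun x : ℝ => ((-(1/(2*σ^2)) : ℝ) : ℂ) * (x:ℂ)^2
        + (((μ/σ^2 : ℝ):ℂ) + (a:ℂ)*Complex.I) * (x:ℂ) + ((-(μ^2/(2*σ^2)) : ℝ):ℂ))
        (2*((-(1/(2*σ^2)) : ℝ) : ℂ)*(θ:ℂ) + (((μ/σ^2 : ℝ):ℂ) + (a:ℂ)*Complex.I)) θ := by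
      have hsq : HasDerivAt (fun x : ℝ => (x:ℂ)^2) (2*(θ:ℂ)) θ := by
        have := h0.mul h0
        simp only [one_mul, mul_one] at this
        simp only [pow_two, two_mul]
        exact this
      have h1 := (hsq.const_mul ((-(1/(2*σ^2)) : ℝ) : ℂ))
      have h2 := (h0.const_mul ((((μ/σ^2 : ℝ):ℂ) + (a:ℂ)*Complex.I)))
      have := (h1.add h2).add_const ((-(μ^2/(2*σ^2)) : ℝ):ℂ)
      exact this.congr_deriv (by ring)
    have hEd : HasDerivAt E (2*((-(1/(2*σ^2)) : ℝ) : ℂ)*(θ:ℂ)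
        + (((μ/σ^2 : ℝ):ℂ) + (a:ℂ)*Complex.I)) θ := by
      refine hEq.congr_of_eventuallyEq ?_
      filter_upwards with x
      rw [hE]
      exact (quad_eq (μ := μ) hσ a x).symm
    have hexp := (Complex.hasDerivAt_exp (E θ)).comp θ hEd
    have := hexp.const_mul (((σ:ℂ))^2)
    refine this.congr_deriv ?_
    push_cast
    field_simp
    ring
  have hf' : Integrable fun θ : ℝ =>
      (Complex.I * (a:ℂ) * ((σ:ℂ))^2 - ((θ:ℂ) - (μ:ℂ))) * Complex.exp (E θ) := by
    have h1 := (integrable_cexp1 hσ a (μ := μ)).const_mul (Complex.I * (a:ℂ) * ((σ:ℂ))^2)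
    have h2 := integrable_xcexp1 hσ a (μ := μ)
    refine (h1.sub h2).congr ?_
    filter_upwards with θ
    simp only [Pi.sub_apply, hE, sub_mul]
  have hf : Integrable fun θ : ℝ => ((σ:ℂ))^2 * Complex.exp (E θ) :=
    (integrable_cexp1 hσ a (μ := μ)).const_mul _
  have hzero := integral_eq_zero_of_hasDerivAt_of_integrable hderiv hf' hf
  have hsplit : ∫ θ : ℝ, (Complex.I * (a:ℂ) * ((σ:ℂ))^2 - ((θ:ℂ) - (μ:ℂ)))
      * Complex.exp (E θ)
      = Complex.I * (a:ℂ) * ((σ:ℂ))^2 * (∫ θ : ℝ, Complex.exp (E θ))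
        - ∫ θ : ℝ, ((θ:ℂ) - (μ:ℂ)) * Complex.exp (E θ) := by
    rw [← MeasureTheory.integral_const_mul, ← integral_sub
      ((integrable_cexp1 hσ a (μ := μ)).const_mul _) (integrable_xcexp1 hσ a (μ := μ))]
    congr 1
    funext θ
    rw [sub_mul]
  rw [hsplit] at hzero
  have := sub_eq_zero.mp hzero
  rw [← this, I1 hσ a]
end CplxInt2

section RealInt
variable {μ σ : ℝ}

lemma gauss_ofReal (θ : ℝ) : ((gaussDensity μ σ θ : ℝ) : ℂ)
    = ((((Real.sqrt (2*Real.pi) * σ)⁻¹ : ℝ)) : ℂ)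
      * Complex.exp (((-(θ-μ)^2/(2*σ^2) : ℝ) : ℂ)) := by
  simp [gaussDensity, Complex.ofReal_exp]

lemma K_mul (hσ : 0 < σ) :
    ((((Real.sqrt (2*Real.pi) * σ)⁻¹ : ℝ)) : ℂ) * ((Real.sqrt (2*Real.pi) * σ : ℝ) : ℂ) = 1 := by
  rw [← Complex.ofReal_mul]
  norm_cast
  rw [inv_mul_cancel₀]
  positivity

lemma integrable_gauss_cexp (hσ : 0 < σ) (a : ℝ) :
    Integrable fun θ : ℝ =>
      ((gaussDensity μ σ θ : ℝ) : ℂ) * Complex.exp (((a*θ : ℝ):ℂ) * Complex.I) := by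
  refine ((integrable_cexp1 (μ := μ) hσ a).const_mul
    ((((Real.sqrt (2*Real.pi) * σ)⁻¹ : ℝ)) : ℂ)).congr ?_
  filter_upwards with θ
  rw [gauss_ofReal, Complex.exp_add, mul_assoc]

lemma integrable_xgauss_cexp (hσ : 0 < σ) (a : ℝ) :
    Integrable fun θ : ℝ => ((θ - μ : ℝ) : ℂ) *
      ((gaussDensity μ σ θ : ℝ) : ℂ) * Complex.exp (((a*θ : ℝ):ℂ) * Complex.I) := by
  refine ((integrable_xcexp1 (μ := μ) hσ a).const_mul
    ((((Real.sqrt (2*Real.pi) * σ)⁻¹ : ℝ)) : ℂ)).congr ?_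
  filter_upwards with θ
  rw [gauss_ofReal, Complex.exp_add]
  push_cast
  ring

lemma intGauss_cexp (hσ : 0 < σ) (a : ℝ) :
    ∫ θ : ℝ, ((gaussDensity μ σ θ : ℝ) : ℂ) * Complex.exp (((a*θ : ℝ):ℂ) * Complex.I)
      = Complex.exp (((a*μ : ℝ):ℂ) * Complex.I + ((-(a^2*σ^2)/2 : ℝ):ℂ)) := by
  have : (fun θ : ℝ => ((gaussDensity μ σ θ : ℝ) : ℂ) * Complex.exp (((a*θ : ℝ):ℂ) * Complex.I))
      = fun θ : ℝ => ((((Real.sqrt (2*Real.pi) * σ)⁻¹ : ℝ)) : ℂ)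
        * Complex.exp (((-(θ-μ)^2/(2*σ^2) : ℝ) : ℂ) + ((a*θ : ℝ):ℂ) * Complex.I) := by
    funext θ
    rw [gauss_ofReal, Complex.exp_add, mul_assoc]
  rw [this, MeasureTheory.integral_const_mul, I1 hσ a, ← mul_assoc, K_mul hσ, one_mul]

lemma intXGauss_cexp (hσ : 0 < σ) (a : ℝ) :
    ∫ θ : ℝ, ((θ - μ : ℝ) : ℂ) * ((gaussDensity μ σ θ : ℝ) : ℂ)
        * Complex.exp (((a*θ : ℝ):ℂ) * Complex.I)
      = Complex.I * (a:ℂ) * ((σ:ℂ))^2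
        * Complex.exp (((a*μ : ℝ):ℂ) * Complex.I + ((-(a^2*σ^2)/2 : ℝ):ℂ)) := by
  have : (fun θ : ℝ => ((θ - μ : ℝ) : ℂ) * ((gaussDensity μ σ θ : ℝ) : ℂ)
        * Complex.exp (((a*θ : ℝ):ℂ) * Complex.I))
      = fun θ : ℝ => ((((Real.sqrt (2*Real.pi) * σ)⁻¹ : ℝ)) : ℂ)
        * (((θ:ℂ) - (μ:ℂ)) *
          Complex.exp (((-(θ-μ)^2/(2*σ^2) : ℝ) : ℂ) + ((a*θ : ℝ):ℂ) * Complex.I)) := by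
    funext θ
    rw [gauss_ofReal, Complex.exp_add]
    push_cast
    ring
  rw [this, MeasureTheory.integral_const_mul, I2 hσ a]
  rw [show Complex.I * (a:ℂ) * ((σ:ℂ))^2 * (((Real.sqrt (2*Real.pi) * σ : ℝ) : ℂ)
        * Complex.exp (((a*μ : ℝ):ℂ) * Complex.I + ((-(a^2*σ^2)/2 : ℝ):ℂ)))
      = ((Real.sqrt (2*Real.pi) * σ : ℝ) : ℂ) * (Complex.I * (a:ℂ) * ((σ:ℂ))^2
        * Complex.exp (((a*μ : ℝ):ℂ) * Complex.I + ((-(a^2*σ^2)/2 : ℝ):ℂ))) by ring,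
    ← mul_assoc, K_mul hσ, one_mul]
end RealInt

lemma re_integral {f : ℝ → ℂ} (hf : Integrable f) : (∫ x, f x).re = ∫ x, (f x).re := by
  simpa using (integral_re hf).symm

lemma im_integral {f : ℝ → ℂ} (hf : Integrable f) : (∫ x, f x).im = ∫ x, (f x).im := by
  simpa using (integral_im hf).symm

lemma cexp_re (x y : ℝ) :
    (Complex.exp ((x:ℂ)*Complex.I + (y:ℂ))).re = Real.exp y * Real.cos x := by
  rw [Complex.exp_add]
  simp [Complex.exp_mul_I, Complex.mul_re, Complex.exp_ofReal_re, Complex.exp_ofReal_im,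
    Complex.cos_ofReal_re, Complex.sin_ofReal_re]
  ring

lemma cexp_im (x y : ℝ) :
    (Complex.exp ((x:ℂ)*Complex.I + (y:ℂ))).im = Real.exp y * Real.sin x := by
  rw [Complex.exp_add]
  simp [Complex.exp_mul_I, Complex.mul_im, Complex.exp_ofReal_re, Complex.exp_ofReal_im,
    Complex.cos_ofReal_re, Complex.sin_ofReal_re]
  ring

lemma cexp_I_re (x : ℝ) : (Complex.exp ((x:ℂ)*Complex.I)).re = Real.cos x := by
  simp [Complex.exp_mul_I, Complex.cos_ofReal_re]

lemma cexp_I_im (x : ℝ) : (Complex.exp ((x:ℂ)*Complex.I)).im = Real.sin x := by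
  simp [Complex.exp_mul_I, Complex.sin_ofReal_re]

section RealInt2
variable {μ σ : ℝ}

lemma intGaussCos (hσ : 0 < σ) (a : ℝ) :
    ∫ θ : ℝ, gaussDensity μ σ θ * Real.cos (a*θ)
      = Real.exp (-(a^2*σ^2)/2) * Real.cos (a*μ) := by
  have h := re_integral (integrable_gauss_cexp (μ := μ) hσ a)
  rw [intGauss_cexp hσ a] at h
  rw [cexp_re] at h
  rw [h]
  congr 1
  funext θ
  rw [Complex.re_ofReal_mul, cexp_I_re]

lemma intGaussSin (hσ : 0 < σ) (a : ℝ) :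
    ∫ θ : ℝ, gaussDensity μ σ θ * Real.sin (a*θ)
      = Real.exp (-(a^2*σ^2)/2) * Real.sin (a*μ) := by
  have h := im_integral (integrable_gauss_cexp (μ := μ) hσ a)
  rw [intGauss_cexp hσ a, cexp_im] at h
  rw [h]
  congr 1
  funext θ
  rw [Complex.im_ofReal_mul, cexp_I_im]

lemma intXGaussCos (hσ : 0 < σ) (a : ℝ) :
    ∫ θ : ℝ, (θ - μ) * gaussDensity μ σ θ * Real.cos (a*θ)
      = -(σ^2*a) * (Real.exp (-(a^2*σ^2)/2) * Real.sin (a*μ)) := by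
  have h := re_integral (integrable_xgauss_cexp (μ := μ) hσ a)
  rw [intXGauss_cexp hσ a] at h
  have hre : (Complex.I * (a:ℂ) * ((σ:ℂ))^2
      * Complex.exp (((a*μ:ℝ):ℂ) * Complex.I + ((-(a^2*σ^2)/2 : ℝ):ℂ))).re
      = -(σ^2*a) * (Real.exp (-(a^2*σ^2)/2) * Real.sin (a*μ)) := by
    rw [show Complex.I * (a:ℂ) * ((σ:ℂ))^2 = ((a*σ^2 : ℝ):ℂ) * Complex.I by push_cast; ring,
      Complex.mul_re]
    simp only [Complex.mul_I_re, Complex.mul_I_im, Complex.ofReal_re, Complex.ofReal_im]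
    rw [cexp_re, cexp_im]
    ring
  rw [hre] at h
  rw [h]
  congr 1
  funext θ
  rw [show (((θ:ℝ) - μ : ℝ):ℂ) * ((gaussDensity μ σ θ : ℝ):ℂ)
      * Complex.exp (((a*θ:ℝ):ℂ) * Complex.I)
    = (((θ - μ) * gaussDensity μ σ θ : ℝ):ℂ) * Complex.exp (((a*θ:ℝ):ℂ) * Complex.I) by
      push_cast; ring]
  rw [Complex.re_ofReal_mul, cexp_I_re]

lemma intXGaussSin (hσ : 0 < σ) (a : ℝ) :
    ∫ θ : ℝ, (θ - μ) * gaussDensity μ σ θ * Real.sin (a*θ)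
      = σ^2*a * (Real.exp (-(a^2*σ^2)/2) * Real.cos (a*μ)) := by
  have h := im_integral (integrable_xgauss_cexp (μ := μ) hσ a)
  rw [intXGauss_cexp hσ a] at h
  have him : (Complex.I * (a:ℂ) * ((σ:ℂ))^2
      * Complex.exp (((a*μ:ℝ):ℂ) * Complex.I + ((-(a^2*σ^2)/2 : ℝ):ℂ))).im
      = σ^2*a * (Real.exp (-(a^2*σ^2)/2) * Real.cos (a*μ)) := by
    rw [show Complex.I * (a:ℂ) * ((σ:ℂ))^2 = ((a*σ^2 : ℝ):ℂ) * Complex.I by push_cast; ring,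
      Complex.mul_im]
    simp only [Complex.mul_I_re, Complex.mul_I_im, Complex.ofReal_re, Complex.ofReal_im]
    rw [cexp_re, cexp_im]
    ring
  rw [him] at h
  rw [h]
  congr 1
  funext θ
  rw [show (((θ:ℝ) - μ : ℝ):ℂ) * ((gaussDensity μ σ θ : ℝ):ℂ)
      * Complex.exp (((a*θ:ℝ):ℂ) * Complex.I)
    = (((θ - μ) * gaussDensity μ σ θ : ℝ):ℂ) * Complex.exp (((a*θ:ℝ):ℂ) * Complex.I) by
      push_cast; ring]
  rw [Complex.im_ofReal_mul, cexp_I_im]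

lemma integrable_gauss_cos (hσ : 0 < σ) (a : ℝ) :
    Integrable fun θ : ℝ => gaussDensity μ σ θ * Real.cos (a*θ) := by
  refine (integrable_gauss_cexp (μ := μ) hσ a).re.congr ?_
  filter_upwards with θ
  simp only [RCLike.re_to_complex, Complex.re_ofReal_mul, cexp_I_re]

lemma integrable_gauss_sin (hσ : 0 < σ) (a : ℝ) :
    Integrable fun θ : ℝ => gaussDensity μ σ θ * Real.sin (a*θ) := by
  refine (integrable_gauss_cexp (μ := μ) hσ a).im.congr ?_
  filter_upwards with θ
  simp only [RCLike.im_to_complex, Complex.im_ofReal_mul, cexp_I_im]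

lemma integrable_xgauss_cos (hσ : 0 < σ) (a : ℝ) :
    Integrable fun θ : ℝ => (θ - μ) * gaussDensity μ σ θ * Real.cos (a*θ) := by
  refine (integrable_xgauss_cexp (μ := μ) hσ a).re.congr ?_
  filter_upwards with θ
  have hc : ((θ - μ:ℝ):ℂ) * ((gaussDensity μ σ θ:ℝ):ℂ) * Complex.exp (((a*θ:ℝ):ℂ) * Complex.I)
      = (((θ-μ)*gaussDensity μ σ θ : ℝ):ℂ) * Complex.exp (((a*θ:ℝ):ℂ)*Complex.I) := by
    push_cast; ring
  rw [RCLike.re_to_complex, hc, Complex.re_ofReal_mul, cexp_I_re]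

lemma integrable_xgauss_sin (hσ : 0 < σ) (a : ℝ) :
    Integrable fun θ : ℝ => (θ - μ) * gaussDensity μ σ θ * Real.sin (a*θ) := by
  refine (integrable_xgauss_cexp (μ := μ) hσ a).im.congr ?_
  filter_upwards with θ
  have hc : ((θ - μ:ℝ):ℂ) * ((gaussDensity μ σ θ:ℝ):ℂ) * Complex.exp (((a*θ:ℝ):ℂ) * Complex.I)
      = (((θ-μ)*gaussDensity μ σ θ : ℝ):ℂ) * Complex.exp (((a*θ:ℝ):ℂ)*Complex.I) := by
    push_cast; ring
  rw [RCLike.im_to_complex, hc, Complex.im_ofReal_mul, cexp_I_im]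
end RealInt2


/-- for a trigonometric polynomial bias, the expected bias and the chi function
are given by the convergent series `Σ_j Λ^{(2j)}(μ) σ^{2j}/(2j)!!` and
`Σ_j Λ^{(2j+1)}(μ) σ^{2j}/(2j)!!`, where `(2j)!! = 2^j j!`. -/
theorem statement6 (N : ℕ) (c d : ℕ → ℝ) (Λ : ℝ → ℝ)
    (hΛ : ∀ θ, Λ θ = ∑ l ∈ Finset.range (N + 1),
      (c l * Real.cos (l * θ) + d l * Real.sin (l * θ))) :
    ∀ (μ : ℝ) (σ : ℝ), 0 < σ →
      Summable (fun j : ℕ =>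
        iteratedDeriv (2 * j) Λ μ * σ ^ (2 * j) / (2 ^ j * (Nat.factorial j))) ∧
      Summable (fun j : ℕ =>
        iteratedDeriv (2 * j + 1) Λ μ * σ ^ (2 * j) / (2 ^ j * (Nat.factorial j))) ∧
      expBias Λ μ σ = ∑' j : ℕ,
        iteratedDeriv (2 * j) Λ μ * σ ^ (2 * j) / (2 ^ j * (Nat.factorial j)) ∧
      chiFun Λ μ σ = ∑' j : ℕ,
        iteratedDeriv (2 * j + 1) Λ μ * σ ^ (2 * j) / (2 ^ j * (Nat.factorial j)) := by
  have hfun : Λ = fun θ => ∑ l ∈ Finset.range (N + 1),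
      (c l * Real.cos (l * θ) + d l * Real.sin (l * θ)) := funext hΛ
  subst hfun
  intro μ σ hσ
  have hσ' : σ ≠ 0 := hσ.ne'
  set A : ℕ → ℝ := fun l => c l * Real.cos (l * μ) + d l * Real.sin (l * μ) with hA
  set B : ℕ → ℝ := fun l => (l:ℝ) * (d l * Real.cos (l * μ) - c l * Real.sin (l * μ)) with hB
  have hfac : ∀ j : ℕ, ((Nat.factorial j : ℝ)) ≠ 0 :=
    fun j => Nat.cast_ne_zero.mpr (Nat.factorial_ne_zero j)
  have h2j : ∀ j : ℕ, ((2:ℝ))^j ≠ 0 := fun j => by positivity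
  have hpow : ∀ (l j : ℕ), (-((l:ℝ)^2*σ^2/2))^j = (-1:ℝ)^j * (l:ℝ)^(2*j) * σ^(2*j) / 2^j := by
    intro l j
    rw [show -((l:ℝ)^2*σ^2/2) = ((-1) * (l:ℝ)^2 * σ^2) / 2 by ring, div_pow, mul_pow, mul_pow, ← pow_mul, ← pow_mul]
  -- even terms
  have hEvenTerm : ∀ j : ℕ,
      iteratedDeriv (2 * j) (fun θ => ∑ l ∈ Finset.range (N + 1),
        (c l * Real.cos (l * θ) + d l * Real.sin (l * θ))) μ
          * σ ^ (2 * j) / (2 ^ j * (Nat.factorial j))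
      = ∑ l ∈ Finset.range (N + 1), ((-((l:ℝ)^2*σ^2/2))^j / (Nat.factorial j)) * A l := by
    intro j
    rw [iter_trig_even, Finset.sum_mul, Finset.sum_div]
    refine Finset.sum_congr rfl fun l _ => ?_
    rw [hpow l j]
    field_simp
    ring
  have hOddTerm : ∀ j : ℕ,
      iteratedDeriv (2 * j + 1) (fun θ => ∑ l ∈ Finset.range (N + 1),
        (c l * Real.cos (l * θ) + d l * Real.sin (l * θ))) μ
          * σ ^ (2 * j) / (2 ^ j * (Nat.factorial j))
      = ∑ l ∈ Finset.range (N + 1), ((-((l:ℝ)^2*σ^2/2))^j / (Nat.factorial j)) * B l := by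
    intro j
    rw [iter_trig_odd, Finset.sum_mul, Finset.sum_div]
    refine Finset.sum_congr rfl fun l _ => ?_
    rw [hpow l j, hB, pow_succ]
    field_simp
  have hSummEven : Summable (fun j : ℕ =>
      iteratedDeriv (2 * j) (fun θ => ∑ l ∈ Finset.range (N + 1),
        (c l * Real.cos (l * θ) + d l * Real.sin (l * θ))) μ
          * σ ^ (2 * j) / (2 ^ j * (Nat.factorial j))) := by
    rw [funext hEvenTerm]
    exact summable_sum fun (l : ℕ) _ =>
      (Real.summable_pow_div_factorial (-((l:ℝ)^2*σ^2/2))).mul_right (A l)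
  have hSummOdd : Summable (fun j : ℕ =>
      iteratedDeriv (2 * j + 1) (fun θ => ∑ l ∈ Finset.range (N + 1),
        (c l * Real.cos (l * θ) + d l * Real.sin (l * θ))) μ
          * σ ^ (2 * j) / (2 ^ j * (Nat.factorial j))) := by
    rw [funext hOddTerm]
    exact summable_sum fun (l : ℕ) _ =>
      (Real.summable_pow_div_factorial (-((l:ℝ)^2*σ^2/2))).mul_right (B l)
  have htsumEven : (∑' j : ℕ,
      iteratedDeriv (2 * j) (fun θ => ∑ l ∈ Finset.range (N + 1),
        (c l * Real.cos (l * θ) + d l * Real.sin (l * θ))) μ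
          * σ ^ (2 * j) / (2 ^ j * (Nat.factorial j)))
      = ∑ l ∈ Finset.range (N + 1), Real.exp (-((l:ℝ)^2*σ^2/2)) * A l := by
    rw [tsum_congr hEvenTerm, Summable.tsum_finsetSum (fun (l : ℕ) _ =>
      (Real.summable_pow_div_factorial (-((l:ℝ)^2*σ^2/2))).mul_right (A l))]
    refine Finset.sum_congr rfl fun l _ => ?_
    rw [tsum_mul_right, exp_tsum']
  have htsumOdd : (∑' j : ℕ,
      iteratedDeriv (2 * j + 1) (fun θ => ∑ l ∈ Finset.range (N + 1),
        (c l * Real.cos (l * θ) + d l * Real.sin (l * θ))) μ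
          * σ ^ (2 * j) / (2 ^ j * (Nat.factorial j)))
      = ∑ l ∈ Finset.range (N + 1), Real.exp (-((l:ℝ)^2*σ^2/2)) * B l := by
    rw [tsum_congr hOddTerm, Summable.tsum_finsetSum (fun (l : ℕ) _ =>
      (Real.summable_pow_div_factorial (-((l:ℝ)^2*σ^2/2))).mul_right (B l))]
    refine Finset.sum_congr rfl fun l _ => ?_
    rw [tsum_mul_right, exp_tsum']
  have hbias : expBias (fun θ => ∑ l ∈ Finset.range (N + 1),
      (c l * Real.cos (l * θ) + d l * Real.sin (l * θ))) μ σ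
      = ∑ l ∈ Finset.range (N + 1), Real.exp (-((l:ℝ)^2*σ^2/2)) * A l := by
    rw [expBias]
    rw [MeasureTheory.integral_congr_ae (Filter.Eventually.of_forall (fun θ => show
      gaussDensity μ σ θ * (∑ l ∈ Finset.range (N + 1),
        (c l * Real.cos (l * θ) + d l * Real.sin (l * θ)))
      = ∑ l ∈ Finset.range (N + 1), (c l * (gaussDensity μ σ θ * Real.cos (l * θ))
          + d l * (gaussDensity μ σ θ * Real.sin (l * θ))) from by
      rw [Finset.mul_sum]; exact Finset.sum_congr rfl fun l _ => by ring))]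
    have hint : ∀ l ∈ Finset.range (N + 1), Integrable (fun θ : ℝ =>
        c l * (gaussDensity μ σ θ * Real.cos (l * θ))
          + d l * (gaussDensity μ σ θ * Real.sin (l * θ))) :=
      fun l _ => ((integrable_gauss_cos hσ (l:ℝ)).const_mul (c l)).add
        ((integrable_gauss_sin hσ (l:ℝ)).const_mul (d l))
    rw [MeasureTheory.integral_finset_sum _ hint]
    refine Finset.sum_congr rfl fun l _ => ?_
    rw [MeasureTheory.integral_add ((integrable_gauss_cos hσ (l:ℝ)).const_mul (c l))
        ((integrable_gauss_sin hσ (l:ℝ)).const_mul (d l)),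
      MeasureTheory.integral_const_mul, MeasureTheory.integral_const_mul,
      intGaussCos hσ (l:ℝ), intGaussSin hσ (l:ℝ), hA]
    rw [show -(((l:ℝ))^2*σ^2)/2 = -((l:ℝ)^2*σ^2/2) by ring]
    ring
  have hchi : chiFun (fun θ => ∑ l ∈ Finset.range (N + 1),
      (c l * Real.cos (l * θ) + d l * Real.sin (l * θ))) μ σ
      = ∑ l ∈ Finset.range (N + 1), Real.exp (-((l:ℝ)^2*σ^2/2)) * B l := by
    rw [chiFun]
    rw [MeasureTheory.integral_congr_ae (Filter.Eventually.of_forall (fun θ => show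
      (θ - μ) * gaussDensity μ σ θ * (∑ l ∈ Finset.range (N + 1),
        (c l * Real.cos (l * θ) + d l * Real.sin (l * θ)))
      = ∑ l ∈ Finset.range (N + 1), (c l * ((θ - μ) * gaussDensity μ σ θ * Real.cos (l * θ))
          + d l * ((θ - μ) * gaussDensity μ σ θ * Real.sin (l * θ))) from by
      rw [Finset.mul_sum]; exact Finset.sum_congr rfl fun l _ => by ring))]
    have hint : ∀ l ∈ Finset.range (N + 1), Integrable (fun θ : ℝ =>
        c l * ((θ - μ) * gaussDensity μ σ θ * Real.cos (l * θ))
          + d l * ((θ - μ) * gaussDensity μ σ θ * Real.sin (l * θ))) :=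
      fun l _ => ((integrable_xgauss_cos hσ (l:ℝ)).const_mul (c l)).add
        ((integrable_xgauss_sin hσ (l:ℝ)).const_mul (d l))
    rw [MeasureTheory.integral_finset_sum _ hint]
    rw [Finset.mul_sum]
    refine Finset.sum_congr rfl fun l _ => ?_
    rw [MeasureTheory.integral_add ((integrable_xgauss_cos hσ (l:ℝ)).const_mul (c l))
        ((integrable_xgauss_sin hσ (l:ℝ)).const_mul (d l)),
      MeasureTheory.integral_const_mul, MeasureTheory.integral_const_mul,
      intXGaussCos hσ (l:ℝ), intXGaussSin hσ (l:ℝ), hB]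
    rw [show -(((l:ℝ))^2*σ^2)/2 = -((l:ℝ)^2*σ^2/2) by ring]
    field_simp
    ring
  exact ⟨hSummEven, hSummOdd, hbias.trans htsumEven.symm, hchi.trans htsumOdd.symm⟩
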